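/- Let L ≥ 1 and let h, g ∈ ℂ^L with h ≠ 0 and with g not a scalar multiple of h. Perform Gram–Schmidt orthogonalization: q₁ = ‖h‖⁻¹ • h, r₁₂ = ⟪q₁, g⟫, v = g − r₁₂ • q₁, r₂₂ = ‖v‖ (which is positive), q₂ = r₂₂⁻¹ • v, and let φ = arg⟪h, g⟫. Define the PR beamforming vector w ∈ ℂ^L componentwise by w_l = (1/√2)·(exp(−iφ)·conj(q₁ l) + i·conj(q₂ l)). Then min( |Σ_l h_l·w_l|², |Σ_l g_l·w_l|² ) = (1/2)·min(‖h‖², ‖g‖²). (Proposition 2.) -/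

import Mathlib

/-- Proposition 2: with the PR beamforming vector `w`,
`min(|h^T w|², |g^T w|²) = (1/2)·min(‖h‖², ‖g‖²)`. -/
theorem pr_beamforming_minimum_gain
    (L : ℕ) (hL : 1 ≤ L) (h g : EuclideanSpace ℂ (Fin L))
    (hh : h ≠ 0) (hg : ∀ c : ℂ, g ≠ c • h)
    (q₁ q₂ v w : EuclideanSpace ℂ (Fin L)) (r₁₂ : ℂ) (r₂₂ φ : ℝ)
    (hq₁ : q₁ = (‖h‖ : ℂ)⁻¹ • h)
    (hr₁₂ : r₁₂ = (inner ℂ q₁ g : ℂ))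
    (hv : v = g - r₁₂ • q₁)
    (hr₂₂ : r₂₂ = ‖v‖)
    (hr₂₂pos : 0 < r₂₂)
    (hq₂ : q₂ = (r₂₂ : ℂ)⁻¹ • v)
    (hφ : φ = Complex.arg (inner ℂ h g : ℂ))
    (hw : ∀ l, w l = (Real.sqrt 2 : ℂ)⁻¹ *
      (Complex.exp (-(Complex.I * φ)) * (starRingEnd ℂ) (q₁ l) +
        Complex.I * (starRingEnd ℂ) (q₂ l))) :
    min ((‖(∑ l, h l * w l)‖) ^ 2) ((‖(∑ l, g l * w l)‖) ^ 2) =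
      (1 / 2) * min (‖h‖ ^ 2) (‖g‖ ^ 2) := by
  have hnh : (0:ℝ) < ‖h‖ := norm_pos_iff.2 hh
  have hnhC : (‖h‖ : ℂ) ≠ 0 := by exact_mod_cast hnh.ne'
  set e : ℂ := Complex.exp (-(Complex.I * φ)) with he
  have habse : ‖e‖ = 1 := by
    rw [he, Complex.norm_exp]
    simp
  -- key sum formula
  have key : ∀ (x : EuclideanSpace ℂ (Fin L)), ∑ l, x l * w l =
      (Real.sqrt 2 : ℂ)⁻¹ * (e * (inner ℂ q₁ x : ℂ) + Complex.I * (inner ℂ q₂ x : ℂ)) := by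
    intro x
    have step : ∀ l, x l * w l =
        ((Real.sqrt 2 : ℂ)⁻¹ * e) * ((starRingEnd ℂ) (q₁ l) * x l) +
        ((Real.sqrt 2 : ℂ)⁻¹ * Complex.I) * ((starRingEnd ℂ) (q₂ l) * x l) := by
      intro l; rw [hw]; ring
    rw [Finset.sum_congr rfl (fun l _ => step l), Finset.sum_add_distrib,
      ← Finset.mul_sum, ← Finset.mul_sum]
    simp only [PiLp.inner_apply, RCLike.inner_apply]
    rw [Finset.sum_congr rfl (fun i _ => mul_comm (x i) ((starRingEnd ℂ) (q₁ i))),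
      Finset.sum_congr rfl (fun i _ => mul_comm (x i) ((starRingEnd ℂ) (q₂ i)))]
    ring
  -- inner products
  have hq1h : (inner ℂ q₁ h : ℂ) = (‖h‖ : ℂ) := by
    rw [hq₁, inner_smul_left, inner_self_eq_norm_sq_to_K, map_inv₀, Complex.conj_ofReal]
    field_simp
    rfl
  have hq1q1 : (inner ℂ q₁ q₁ : ℂ) = 1 := by
    rw [hq₁, inner_smul_right, inner_smul_left, inner_self_eq_norm_sq_to_K,
      map_inv₀, Complex.conj_ofReal]
    have : ((‖h‖:ℂ))⁻¹ * ((‖h‖:ℂ)⁻¹ * (‖h‖:ℂ)^2) = 1 := by field_simp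
    exact this
  have hq1v : (inner ℂ q₁ v : ℂ) = 0 := by
    rw [hv, inner_sub_right, inner_smul_right, hq1q1, ← hr₁₂]
    ring
  have hvq1 : (inner ℂ v q₁ : ℂ) = 0 := by
    rw [← inner_conj_symm, hq1v, map_zero]
  have hhq1 : h = (‖h‖ : ℂ) • q₁ := by
    rw [hq₁, smul_smul]
    rw [mul_inv_cancel₀ hnhC, one_smul]
  have hvh : (inner ℂ v h : ℂ) = 0 := by
    rw [hhq1, inner_smul_right, hvq1, mul_zero]
  have hq2h : (inner ℂ q₂ h : ℂ) = 0 := by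
    rw [hq₂, inner_smul_left, hvh, mul_zero]
  have hvv : (inner ℂ v v : ℂ) = ((r₂₂ ^ 2 : ℝ) : ℂ) := by
    rw [inner_self_eq_norm_sq_to_K, hr₂₂]; push_cast; rfl
  have hvg : (inner ℂ v g : ℂ) = ((r₂₂ ^ 2 : ℝ) : ℂ) := by
    have h1 : (inner ℂ v v : ℂ) = inner ℂ v g - r₁₂ * inner ℂ v q₁ := by
      rw [hv, inner_sub_right, inner_smul_right]
    rw [← hvv, h1, hvq1]; ring
  have hr₂₂C : ((r₂₂:ℂ)) ≠ 0 := by exact_mod_cast hr₂₂pos.ne'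
  have hq2g : (inner ℂ q₂ g : ℂ) = (r₂₂ : ℂ) := by
    rw [hq₂, inner_smul_left, hvg, map_inv₀, Complex.conj_ofReal]
    push_cast
    field_simp
  -- φ = arg r₁₂, so e * r₁₂ = |r₁₂|
  have hhg : (inner ℂ h g : ℂ) = (‖h‖ : ℂ) * r₁₂ := by
    conv_lhs => rw [hhq1, inner_smul_left]
    rw [hr₁₂, Complex.conj_ofReal]
  have hφ' : φ = Complex.arg r₁₂ := by
    rw [hφ, hhg, Complex.arg_real_mul _ hnh]
  have her : e * r₁₂ = ((‖r₁₂‖ : ℝ) : ℂ) := by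
    calc e * r₁₂ = Complex.exp (-(Complex.I * (r₁₂.arg : ℂ))) *
          ((‖r₁₂‖ : ℂ) * Complex.exp ((r₁₂.arg : ℂ) * Complex.I)) := by
            rw [he, hφ', Complex.norm_mul_exp_arg_mul_I]
      _ = (‖r₁₂‖ : ℂ) *
          Complex.exp (-(Complex.I * (r₁₂.arg : ℂ)) + (r₁₂.arg : ℂ) * Complex.I) := by
            rw [Complex.exp_add]; ring
      _ = (‖r₁₂‖ : ℂ) := by
            rw [show -(Complex.I * (r₁₂.arg : ℂ)) + (r₁₂.arg : ℂ) * Complex.I = 0 by ring,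
              Complex.exp_zero, mul_one]
  -- norms relation
  have hg2 : (‖g‖ : ℝ) ^ 2 = ‖r₁₂‖ ^ 2 + r₂₂ ^ 2 := by
    have hgv : g = v + r₁₂ • q₁ := by rw [hv]; abel
    have h2 : (inner ℂ g g : ℂ) = ((‖r₁₂‖ ^ 2 + r₂₂ ^ 2 : ℝ) : ℂ) := by
      conv_lhs => rw [hgv]
      rw [inner_add_add_self, inner_smul_right, inner_smul_left, inner_smul_left,
        inner_smul_right, hvq1, hq1v, hq1q1, hvv]
      simp only [mul_zero, zero_mul, mul_one, add_zero]
      rw [mul_comm ((starRingEnd ℂ) r₁₂), Complex.mul_conj, Complex.normSq_eq_norm_sq]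
      push_cast
      ring
    have h3 : (inner ℂ g g : ℂ) = ((‖g‖ ^ 2 : ℝ) : ℂ) := by
      rw [inner_self_eq_norm_sq_to_K]; push_cast; rfl
    rw [h3] at h2
    exact_mod_cast h2
  -- compute |h^T w|^2
  have hsqrt2 : (0:ℝ) < Real.sqrt 2 := Real.sqrt_pos.2 (by norm_num)
  have habsh : (‖(∑ l, h l * w l)‖) ^ 2 = (1/2) * ‖h‖ ^ 2 := by
    rw [key h, hq1h, hq2h, mul_zero, add_zero]
    rw [norm_mul, norm_mul, habse, one_mul, norm_inv, Complex.norm_real,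
      Complex.norm_real, Real.norm_eq_abs, Real.norm_eq_abs, abs_of_pos hsqrt2, abs_of_pos hnh]
    rw [mul_pow, inv_pow, Real.sq_sqrt (by norm_num : (0:ℝ) ≤ 2)]
    ring
  have habsg : (‖(∑ l, g l * w l)‖) ^ 2 = (1/2) * ‖g‖ ^ 2 := by
    rw [key g, ← hr₁₂, hq2g]
    have h4 : e * r₁₂ + Complex.I * (r₂₂:ℂ) =
        Complex.mk (‖r₁₂‖) r₂₂ := by
      rw [her]
      apply Complex.ext <;> simp
    rw [h4, norm_mul, norm_inv, Complex.norm_real, Real.norm_eq_abs, abs_of_pos hsqrt2]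
    rw [mul_pow, inv_pow, Real.sq_sqrt (by norm_num : (0:ℝ) ≤ 2), Complex.sq_norm,
      Complex.normSq_mk, hg2]
    ring
  rw [habsh, habsg]
  rcases le_total (‖h‖^2) (‖g‖^2) with hle | hle
  · rw [min_eq_left hle, min_eq_left (by linarith)]
  · rw [min_eq_right hle, min_eq_right (by linarith)]
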